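/- With $V = \mathrm{diag}(\bm\gamma) - d_I\mathcal{L}$ and $F_N = \mathrm{diag}(N\bm\alpha\circ\bm\beta/(\bm\zeta + N\bm\alpha))$ for $N>0$, the basic reproduction number $\mathcal{R}_0(N) = \rho(F_N V^{-1})$ is strictly increasing in $N>0$, satisfies $\lim_{N\to 0^+}\mathcal{R}_0(N) = 0$, and $\lim_{N\to\infty}\mathcal{R}_0(N) = \rho(\mathrm{diag}(\bm\beta) V^{-1})$. -/

import Mathlib

open Matrix Filter

/-- A square matrix is quasipositive if all its off-diagonal entries are nonnegative. -/
def Quasipositive {n : ℕ} (L : Matrix (Fin n) (Fin n) ℝ) : Prop :=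
  ∀ i j, i ≠ j → 0 ≤ L i j

/-- Irreducibility in the standard sense of matrix theory. -/
def MatIrreducible {n : ℕ} (L : Matrix (Fin n) (Fin n) ℝ) : Prop :=
  ∀ S : Set (Fin n), S.Nonempty → S ≠ Set.univ → ∃ i ∉ S, ∃ j ∈ S, L i j ≠ 0

/-- The spectral radius: the maximum modulus of the (complex) eigenvalues. -/
noncomputable def specRad {n : ℕ} (M : Matrix (Fin n) (Fin n) ℝ) : ℝ :=
  sSup ((fun z : ℂ => ‖z‖) '' spectrum ℂ (M.map (algebraMap ℝ ℂ)))

open scoped ENNReal NNReal Pointwise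

section Aux
attribute [local instance] Matrix.linftyOpNormedRing Matrix.linftyOpNormedAlgebra
  Matrix.linftyOpNormedSpace

variable {n : ℕ}

noncomputable def cplx (M : Matrix (Fin n) (Fin n) ℝ) : Matrix (Fin n) (Fin n) ℂ :=
  M.map (algebraMap ℝ ℂ)

lemma cplx_pow (M : Matrix (Fin n) (Fin n) ℝ) (k : ℕ) : cplx (M ^ k) = (cplx M) ^ k :=
  map_pow ((algebraMap ℝ ℂ).mapMatrix) M k

lemma nnnorm_cplx (M : Matrix (Fin n) (Fin n) ℝ) : ‖cplx M‖₊ = ‖M‖₊ := by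
  rw [linfty_opNNNorm_def, linfty_opNNNorm_def]
  congr 1; ext i; congr 1; ext j : 1
  simp [cplx, Matrix.map_apply, Complex.nnnorm_real]

lemma gelfand (M : Matrix (Fin n) (Fin n) ℝ) :
    Tendsto (fun k : ℕ => (‖M ^ k‖₊ : ℝ≥0∞) ^ (1 / k : ℝ)) atTop
      (nhds (spectralRadius ℂ (cplx M))) := by
  have := spectrum.pow_nnnorm_pow_one_div_tendsto_nhds_spectralRadius (cplx M)
  convert this using 3 with k
  rw [← cplx_pow, nnnorm_cplx]

section
variable [Nonempty (Fin n)]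


lemma sr_ne_top (M : Matrix (Fin n) (Fin n) ℝ) : spectralRadius ℂ (cplx M) ≠ ⊤ :=
  (lt_of_le_of_lt (spectrum.spectralRadius_le_nnnorm (𝕜 := ℂ) (cplx M)) (ENNReal.coe_lt_top)).ne

lemma specRad_isGreatest (M : Matrix (Fin n) (Fin n) ℝ) :
    IsGreatest ((fun z : ℂ => ‖z‖) '' spectrum ℂ (cplx M))
      ((spectralRadius ℂ (cplx M)).toReal) := by
  obtain ⟨z, hz, hz2⟩ := spectrum.exists_nnnorm_eq_spectralRadius (cplx M)
  have htz : (spectralRadius ℂ (cplx M)).toReal = ‖z‖ := by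
    rw [← hz2]; simp [coe_nnnorm]
  constructor
  · exact htz ▸ ⟨z, hz, rfl⟩
  · rintro x ⟨w, hw, rfl⟩
    have h1 : (‖w‖₊ : ℝ≥0∞) ≤ spectralRadius ℂ (cplx M) :=
      le_iSup₂ (f := fun k (_ : k ∈ spectrum ℂ (cplx M)) => (‖k‖₊ : ℝ≥0∞)) w hw
    rw [← hz2, ENNReal.coe_le_coe] at h1
    rw [htz]
    calc ‖w‖ = ‖w‖ := rfl
    _ ≤ ‖z‖ := h1
    _ = ‖z‖ := rfl

lemma specRad_eq_toReal (M : Matrix (Fin n) (Fin n) ℝ) :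
    specRad M = (spectralRadius ℂ (cplx M)).toReal := by
  have h := specRad_isGreatest M
  exact IsGreatest.csSup_eq h

lemma specRad_nonneg (M : Matrix (Fin n) (Fin n) ℝ) : 0 ≤ specRad M := by
  rw [specRad_eq_toReal]; exact ENNReal.toReal_nonneg

end

lemma pow_entry_nonneg {A : Matrix (Fin n) (Fin n) ℝ} (hA : ∀ i j, 0 ≤ A i j) (k : ℕ) :
    ∀ i j, 0 ≤ (A ^ k) i j := by
  induction k with
  | zero => intro i j; rw [pow_zero, Matrix.one_apply]; positivity
  | succ k ih =>
      intro i j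
      rw [pow_succ, Matrix.mul_apply]
      exact Finset.sum_nonneg fun l _ => mul_nonneg (ih i l) (hA l j)

lemma pow_entry_le {A B : Matrix (Fin n) (Fin n) ℝ} (hA : ∀ i j, 0 ≤ A i j)
    (hAB : ∀ i j, A i j ≤ B i j) (k : ℕ) : ∀ i j, (A ^ k) i j ≤ (B ^ k) i j := by
  induction k with
  | zero => intro i j; rw [pow_zero, pow_zero]
  | succ k ih =>
      intro i j
      rw [pow_succ, pow_succ, Matrix.mul_apply, Matrix.mul_apply]
      refine Finset.sum_le_sum fun l _ => mul_le_mul (ih i l) (hAB l j) (hA l j)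
        (pow_entry_nonneg (fun i j => le_trans (hA i j) (hAB i j)) k i l)

lemma nnnorm_le_of_entry_le {A B : Matrix (Fin n) (Fin n) ℝ} (hA : ∀ i j, 0 ≤ A i j)
    (hAB : ∀ i j, A i j ≤ B i j) : ‖A‖₊ ≤ ‖B‖₊ := by
  rw [linfty_opNNNorm_def, linfty_opNNNorm_def]
  refine Finset.sup_mono_fun fun i _ => Finset.sum_le_sum fun j _ => ?_
  rw [← NNReal.coe_le_coe, coe_nnnorm, coe_nnnorm, Real.norm_eq_abs, Real.norm_eq_abs,
    abs_of_nonneg (hA i j), abs_of_nonneg (le_trans (hA i j) (hAB i j))]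
  exact hAB i j

lemma sr_mono {A B : Matrix (Fin n) (Fin n) ℝ} (hA : ∀ i j, 0 ≤ A i j)
    (hAB : ∀ i j, A i j ≤ B i j) :
    spectralRadius ℂ (cplx A) ≤ spectralRadius ℂ (cplx B) := by
  refine le_of_tendsto_of_tendsto' (gelfand A) (gelfand B) fun k => ?_
  refine ENNReal.rpow_le_rpow ?_ (by positivity)
  exact_mod_cast nnnorm_le_of_entry_le (pow_entry_nonneg hA k) (pow_entry_le hA hAB k)

lemma specRad_mono [Nonempty (Fin n)] {A B : Matrix (Fin n) (Fin n) ℝ} (hA : ∀ i j, 0 ≤ A i j)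
    (hAB : ∀ i j, A i j ≤ B i j) : specRad A ≤ specRad B := by
  rw [specRad_eq_toReal, specRad_eq_toReal]
  exact ENNReal.toReal_mono (sr_ne_top B) (sr_mono hA hAB)

lemma specRad_diag_le [Nonempty (Fin n)] {A : Matrix (Fin n) (Fin n) ℝ} {d : ℝ}
    (hA : ∀ i j, 0 ≤ A i j) (hd : 0 ≤ d) (hdiag : ∀ i, d ≤ A i i) : d ≤ specRad A := by
  rw [specRad_eq_toReal]
  have key : ∀ k : ℕ, ∀ i, d ^ k ≤ (A ^ k) i i := by
    intro k
    induction k with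
    | zero => intro i; simp [Matrix.one_apply]
    | succ k ih =>
        intro i
        rw [pow_succ, pow_succ, Matrix.mul_apply]
        calc d ^ k * d ≤ (A ^ k) i i * A i i :=
              mul_le_mul (ih i) (hdiag i) hd (pow_entry_nonneg hA k i i)
        _ ≤ ∑ l, (A ^ k) i l * A l i := by
              refine Finset.single_le_sum (f := fun l => (A ^ k) i l * A l i)
                (fun l _ => mul_nonneg (pow_entry_nonneg hA k i l) (hA l i)) (Finset.mem_univ i)
  have hentry : ∀ k : ℕ, (d.toNNReal : ℝ≥0∞) ^ (k : ℕ) ≤ (‖A ^ k‖₊ : ℝ≥0∞) := by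
    intro k
    obtain ⟨i⟩ := (inferInstance : Nonempty (Fin n))
    have h1 : d ^ k ≤ ‖A ^ k‖ := by
      refine le_trans (key k i) ?_
      have h2 : ‖(A ^ k) i i‖₊ ≤ ‖A ^ k‖₊ := by
        rw [linfty_opNNNorm_def]
        refine le_trans ?_ (Finset.le_sup (Finset.mem_univ i))
        exact Finset.single_le_sum (f := fun j => ‖(A ^ k) i j‖₊) (fun j _ => zero_le)
          (Finset.mem_univ i)
      calc (A ^ k) i i ≤ |(A ^ k) i i| := le_abs_self _
      _ = ‖(A ^ k) i i‖ := (Real.norm_eq_abs _).symm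
      _ ≤ ‖A ^ k‖ := h2
    rw [← ENNReal.coe_pow, ENNReal.coe_le_coe, ← NNReal.coe_le_coe]
    push_cast
    rw [Real.coe_toNNReal _ hd]
    exact le_trans h1 (le_of_eq rfl)
  have hlim : (d.toNNReal : ℝ≥0∞) ≤ spectralRadius ℂ (cplx A) := by
    refine ge_of_tendsto (gelfand A) ?_
    filter_upwards [eventually_ge_atTop 1] with k hk
    have hk0 : (k : ℝ) ≠ 0 := by positivity
    calc (d.toNNReal : ℝ≥0∞) = ((d.toNNReal : ℝ≥0∞) ^ (k : ℕ)) ^ (1 / k : ℝ) := by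
          rw [← ENNReal.rpow_natCast, ← ENNReal.rpow_mul, mul_one_div, div_self hk0,
            ENNReal.rpow_one]
    _ ≤ (‖A ^ k‖₊ : ℝ≥0∞) ^ (1 / k : ℝ) := ENNReal.rpow_le_rpow (hentry k) (by positivity)
  calc d = ((d.toNNReal : ℝ≥0∞)).toReal := by simp [Real.coe_toNNReal _ hd]
  _ ≤ (spectralRadius ℂ (cplx A)).toReal := ENNReal.toReal_mono (sr_ne_top A) hlim

lemma cplx_smul (c : ℝ) (M : Matrix (Fin n) (Fin n) ℝ) :
    cplx (c • M) = (c : ℂ) • cplx M := by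
  ext i j
  simp [cplx, Matrix.map_apply, Matrix.smul_apply, Complex.ofReal_mul]

lemma specRad_smul [Nonempty (Fin n)] (M : Matrix (Fin n) (Fin n) ℝ) {c : ℝ} (hc : 0 ≤ c) :
    specRad (c • M) = c * specRad M := by
  rcases hc.eq_or_lt with h | h
  · subst h
    rw [zero_smul, zero_mul]
    show sSup ((fun z : ℂ => ‖z‖) '' spectrum ℂ (cplx (0 : Matrix (Fin n) (Fin n) ℝ))) = 0
    have h0 : cplx (0 : Matrix (Fin n) (Fin n) ℝ) = 0 := by
      ext i j; simp [cplx, Matrix.map_apply]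
    rw [h0, spectrum.zero_eq, Set.image_singleton]
    simp
  · have hne := spectrum.nonempty (cplx M)
    have hsp : spectrum ℂ (cplx (c • M)) = (c : ℂ) • spectrum ℂ (cplx M) := by
      rw [cplx_smul, spectrum.smul_eq_smul _ _ hne]
    have hset : (fun z : ℂ => ‖z‖) '' spectrum ℂ (cplx (c • M)) =
        (fun x => c * x) '' ((fun z : ℂ => ‖z‖) '' spectrum ℂ (cplx M)) := by
      rw [hsp, ← Set.image_smul, Set.image_image, Set.image_image]
      refine Set.image_congr fun z _ => ?_
      simp [norm_mul, Complex.norm_real, Real.norm_eq_abs, abs_of_nonneg h.le, smul_eq_mul]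
    have hg : IsGreatest ((fun z : ℂ => ‖z‖) '' spectrum ℂ (cplx M)) (specRad M) := by
      rw [specRad_eq_toReal]; exact specRad_isGreatest M
    have hg2 : IsGreatest ((fun z : ℂ => ‖z‖) '' spectrum ℂ (cplx (c • M)))
        (c * specRad M) := by
      rw [hset]
      refine ⟨⟨_, hg.1, rfl⟩, ?_⟩
      rintro x ⟨y, hy, rfl⟩
      exact mul_le_mul_of_nonneg_left (hg.2 hy) hc
    exact hg2.csSup_eq

lemma entry_nnnorm_le (M : Matrix (Fin n) (Fin n) ℝ) (i j : Fin n) : ‖M i j‖ ≤ ‖M‖ := by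
  rw [← coe_nnnorm, ← coe_nnnorm, NNReal.coe_le_coe, linfty_opNNNorm_def]
  refine le_trans ?_ (Finset.le_sup (Finset.mem_univ i))
  exact Finset.single_le_sum (f := fun j => ‖M i j‖₊) (fun j _ => zero_le) (Finset.mem_univ j)

lemma Vinv_nonneg (hn : 0 < n) (L : Matrix (Fin n) (Fin n) ℝ)
    (hq : ∀ i j, i ≠ j → 0 ≤ L i j) (hcol : ∀ j, ∑ i, L i j = 0)
    (γ : Fin n → ℝ) (hγ : ∀ i, 0 < γ i) (dI : ℝ) (hdI : 0 < dI) :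
    (∀ i j, 0 ≤ (Matrix.diagonal γ - dI • L)⁻¹ i j) ∧
      (∀ i, 0 < (Matrix.diagonal γ - dI • L)⁻¹ i i) := by
  haveI : Nonempty (Fin n) := ⟨⟨0, hn⟩⟩
  set V := Matrix.diagonal γ - dI • L with hVdef
  have hLd : ∀ i, L i i ≤ 0 := by
    intro i
    have h1 : (∑ j ∈ Finset.univ.erase i, L j i) + L i i = 0 := by
      rw [Finset.sum_erase_add _ _ (Finset.mem_univ i)]; exact hcol i
    have h2 : 0 ≤ ∑ j ∈ Finset.univ.erase i, L j i :=
      Finset.sum_nonneg fun j hj => hq j i (Finset.mem_erase.mp hj).1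
    linarith
  set s : ℝ := (∑ i, (γ i - dI * L i i)) + 1 with hsdef
  have hterm : ∀ i, 0 ≤ γ i - dI * L i i := fun i => by nlinarith [hγ i, hLd i]
  have hs_gt : ∀ i, γ i - dI * L i i < s := fun i =>
    lt_of_le_of_lt (Finset.single_le_sum (fun j _ => hterm j) (Finset.mem_univ i))
      (lt_add_one _)
  have hs_pos : 0 < s := by
    have := Finset.sum_nonneg (fun i (_ : i ∈ Finset.univ) => hterm i); linarith
  have hs_ne : s ≠ 0 := hs_pos.ne'
  set B : Matrix (Fin n) (Fin n) ℝ := s • (1 : Matrix (Fin n) (Fin n) ℝ) - V with hBdef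
  have hB : ∀ i j, 0 ≤ B i j := by
    intro i j
    by_cases h : i = j
    · subst h
      have := hs_gt i
      simp only [hBdef, hVdef, Matrix.sub_apply, Matrix.smul_apply, Matrix.one_apply_eq,
        Matrix.diagonal_apply_eq, smul_eq_mul]
      linarith
    · have := hq i j h
      simp only [hBdef, hVdef, Matrix.sub_apply, Matrix.smul_apply,
        Matrix.one_apply_ne h, Matrix.diagonal_apply_ne _ h, smul_eq_mul]
      nlinarith
  have hBsum : ∀ j, ∑ i, B i j = s - γ j := by
    intro j
    have hrw : ∀ i, B i j = (if i = j then s else 0) - (if i = j then γ j else 0)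
        + dI * L i j := by
      intro i
      by_cases h : i = j
      · subst h
        simp [hBdef, hVdef, Matrix.sub_apply, Matrix.smul_apply, smul_eq_mul]
        ring
      · simp [hBdef, hVdef, Matrix.sub_apply, Matrix.smul_apply, Matrix.one_apply_ne h,
          Matrix.diagonal_apply_ne _ h, h, smul_eq_mul]
    rw [Finset.sum_congr rfl (fun i _ => hrw i)]
    rw [Finset.sum_add_distrib, Finset.sum_sub_distrib, Finset.sum_ite_eq' Finset.univ j
      (fun _ => s), Finset.sum_ite_eq' Finset.univ j (fun _ => γ j), ← Finset.mul_sum,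
      hcol j]
    simp
  set C : Matrix (Fin n) (Fin n) ℝ := s⁻¹ • Bᵀ with hCdef
  have hC0 : ∀ i j, 0 ≤ C i j := fun i j =>
    mul_nonneg (inv_nonneg.mpr hs_pos.le) (hB j i)
  have hCnorm : ‖C‖ < 1 := by
    rw [← coe_nnnorm, ← NNReal.coe_one, NNReal.coe_lt_coe, linfty_opNNNorm_def]
    refine Finset.sup_lt_iff (by norm_num) |>.mpr fun i _ => ?_
    rw [← NNReal.coe_lt_coe, NNReal.coe_one, NNReal.coe_sum]
    have hCsum : ∑ j, C i j = 1 - s⁻¹ * γ i := by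
      have : ∑ j, C i j = s⁻¹ * ∑ j, B j i := by
        rw [Finset.mul_sum]
        exact Finset.sum_congr rfl fun j _ => rfl
      rw [this, hBsum i]
      field_simp
    have : ∀ j, (‖C i j‖₊ : ℝ) = C i j := fun j => by
      rw [coe_nnnorm, Real.norm_eq_abs, abs_of_nonneg (hC0 i j)]
    rw [Finset.sum_congr rfl fun j _ => this j, hCsum]
    have : 0 < s⁻¹ * γ i := mul_pos (inv_pos.mpr hs_pos) (hγ i)
    linarith
  have hsum : Summable (fun k : ℕ => C ^ k) := summable_geometric_of_norm_lt_one hCnorm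
  set X : Matrix (Fin n) (Fin n) ℝ := ∑' k : ℕ, C ^ k with hXdef
  have hX1 : ((1 : Matrix (Fin n) (Fin n) ℝ) - C) * X = 1 := (Units.oneSub C hCnorm).val_inv
  have hXentry : ∀ i j, HasSum (fun k : ℕ => (C ^ k) i j) (X i j) := by
    intro i j
    have hφc : Continuous (fun M : Matrix (Fin n) (Fin n) ℝ => M i j) := by
      refine AddMonoidHomClass.continuous_of_bound
        (AddMonoidHom.mk' (fun M : Matrix (Fin n) (Fin n) ℝ => M i j) (fun a b => rfl)) 1
        fun M => ?_
      rw [one_mul]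
      exact entry_nnnorm_le M i j
    exact hsum.hasSum.map
      (AddMonoidHom.mk' (fun M : Matrix (Fin n) (Fin n) ℝ => M i j) (fun a b => rfl)) hφc
  have hX0 : ∀ i j, 0 ≤ X i j := fun i j =>
    hasSum_le (fun k => pow_entry_nonneg hC0 k i j) hasSum_zero (hXentry i j)
  have hXdiag : ∀ i, 1 ≤ X i i := by
    intro i
    have := le_hasSum (hXentry i i) 0 (fun k _ => pow_entry_nonneg hC0 k i i)
    simpa using this
  have hBT : Bᵀ = s • (1 : Matrix (Fin n) (Fin n) ℝ) - Vᵀ := by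
    rw [hBdef, Matrix.transpose_sub, Matrix.transpose_smul, Matrix.transpose_one]
  have hVT : Vᵀ = s • ((1 : Matrix (Fin n) (Fin n) ℝ) - C) := by
    have h2 : s • ((1 : Matrix (Fin n) (Fin n) ℝ) - C) = s • 1 - Bᵀ := by
      rw [smul_sub, hCdef, smul_smul, mul_inv_cancel₀ hs_ne, one_smul]
    rw [h2, hBT]
    abel
  have hright : Vᵀ * (s⁻¹ • X) = 1 := by
    rw [hVT, Matrix.smul_mul, Matrix.mul_smul, smul_smul, mul_inv_cancel₀ hs_ne, one_smul,
      hX1]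
  have hVTinv : (Vᵀ)⁻¹ = s⁻¹ • X := Matrix.inv_eq_right_inv hright
  have hVinv : V⁻¹ = (s⁻¹ • X)ᵀ := by
    rw [← hVTinv, ← Matrix.transpose_nonsing_inv, Matrix.transpose_transpose]
  constructor
  · intro i j
    rw [hVinv]
    exact mul_nonneg (inv_nonneg.mpr hs_pos.le) (hX0 j i)
  · intro i
    rw [hVinv]
    have : (0:ℝ) < s⁻¹ * X i i :=
      mul_pos (inv_pos.mpr hs_pos) (lt_of_lt_of_le one_pos (hXdiag i))
    exact this

end Aux

section Main
attribute [local instance] Matrix.linftyOpNormedRing Matrix.linftyOpNormedAlgebra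
  Matrix.linftyOpNormedSpace

theorem stmt2 {n : ℕ} (hn : 0 < n) (L : Matrix (Fin n) (Fin n) ℝ)
    (hq : Quasipositive L) (hirr : MatIrreducible L)
    (hcol : ∀ j, ∑ i, L i j = 0)
    (α β γ ζ : Fin n → ℝ) (dI : ℝ) (hdI : 0 < dI)
    (hα : ∀ j, 0 < α j) (hαnull : L.mulVec α = 0) (hαsum : ∑ j, α j = 1)
    (hβ : ∀ j, 0 < β j) (hγ : ∀ j, 0 < γ j) (hζ : ∀ j, 0 < ζ j) :
    let V := Matrix.diagonal γ - dI • L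
    let R0 : ℝ → ℝ := fun N =>
      specRad (Matrix.diagonal (fun i => N * α i * β i / (ζ i + N * α i)) * V⁻¹)
    StrictMonoOn R0 (Set.Ioi 0) ∧
      Tendsto R0 (nhdsWithin 0 (Set.Ioi 0)) (nhds 0) ∧
      Tendsto R0 atTop (nhds (specRad (Matrix.diagonal β * V⁻¹))) := by
  intro V R0
  haveI : Nonempty (Fin n) := ⟨⟨0, hn⟩⟩
  obtain ⟨hW0, hWd⟩ := Vinv_nonneg hn L hq hcol γ hγ dI hdI
  set W : Matrix (Fin n) (Fin n) ℝ := (Matrix.diagonal γ - dI • L)⁻¹ with hWdef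
  have hVW : V⁻¹ = W := rfl
  set g : ℝ → Fin n → ℝ := fun N i => N * α i * β i / (ζ i + N * α i) with hgdef
  have hden : ∀ N, 0 ≤ N → ∀ i, 0 < ζ i + N * α i := fun N hN i => by
    have := hζ i; have := hα i; nlinarith
  have hg0 : ∀ N, 0 ≤ N → ∀ i, 0 ≤ g N i := fun N hN i =>
    div_nonneg (by have := hα i; have := hβ i; positivity) (hden N hN i).le
  have hgpos : ∀ N, 0 < N → ∀ i, 0 < g N i := fun N hN i =>
    div_pos (by have := hα i; have := hβ i; positivity) (hden N hN.le i)
  have hgβ : ∀ N, 0 ≤ N → ∀ i, g N i ≤ β i := by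
    intro N hN i
    rw [hgdef, div_le_iff₀ (hden N hN i)]
    have := hζ i; have := hα i; have := hβ i; nlinarith
  have hA0 : ∀ N, 0 ≤ N → ∀ i j,
      0 ≤ (Matrix.diagonal (g N) * W) i j := by
    intro N hN i j
    rw [Matrix.diagonal_mul]
    exact mul_nonneg (hg0 N hN i) (hW0 i j)
  -- R0 in terms of g, W
  have hR0 : ∀ N, R0 N = specRad (Matrix.diagonal (g N) * W) := fun N => rfl
  refine ⟨?_, ?_, ?_⟩
  · -- strict monotonicity
    intro N1 hN1 N2 hN2 h12
    simp only [Set.mem_Ioi] at hN1 hN2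
    have hgmono : ∀ i, g N1 i < g N2 i := by
      intro i
      rw [hgdef, div_lt_div_iff₀ (hden N1 hN1.le i) (hden N2 hN2.le i)]
      have := hζ i; have := hα i; have := hβ i
      have key : N1 * (α i * β i * ζ i) < N2 * (α i * β i * ζ i) := by
        apply mul_lt_mul_of_pos_right h12; positivity
      nlinarith [key]
    set c : ℝ := Finset.univ.sup' Finset.univ_nonempty (fun i => g N1 i / g N2 i) with hcdef
    have hc_lt : c < 1 := by
      rw [hcdef, Finset.sup'_lt_iff]
      intro i _
      rw [div_lt_one (hgpos N2 hN2 i)]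
      exact hgmono i
    obtain ⟨i0⟩ := (inferInstance : Nonempty (Fin n))
    have hc_nonneg : 0 ≤ c := by
      refine le_trans (div_nonneg (hg0 N1 hN1.le i0) (hgpos N2 hN2 i0).le) ?_
      exact Finset.le_sup' (f := fun i => g N1 i / g N2 i) (Finset.mem_univ i0)
    have hgc : ∀ i, g N1 i ≤ c * g N2 i := by
      intro i
      have h1 : g N1 i / g N2 i ≤ c := Finset.le_sup' (f := fun i => g N1 i / g N2 i) (Finset.mem_univ i)
      rw [div_le_iff₀ (hgpos N2 hN2 i)] at h1
      linarith
    have hcomp : ∀ i j, (Matrix.diagonal (g N1) * W) i j ≤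
        (c • (Matrix.diagonal (g N2) * W)) i j := by
      intro i j
      rw [Matrix.smul_apply, Matrix.diagonal_mul, Matrix.diagonal_mul, smul_eq_mul,
        ← mul_assoc]
      exact mul_le_mul_of_nonneg_right (hgc i) (hW0 i j)
    have hd : ∀ i, Finset.univ.inf' Finset.univ_nonempty (fun i => g N2 i * W i i) ≤
        (Matrix.diagonal (g N2) * W) i i := by
      intro i
      rw [Matrix.diagonal_mul]
      exact Finset.inf'_le _ (Finset.mem_univ i)
    have hdpos : 0 < Finset.univ.inf' Finset.univ_nonempty (fun i => g N2 i * W i i) := by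
      rw [Finset.lt_inf'_iff]
      exact fun i _ => mul_pos (hgpos N2 hN2 i) (hWd i)
    have hS_pos : 0 < specRad (Matrix.diagonal (g N2) * W) :=
      lt_of_lt_of_le hdpos (specRad_diag_le (hA0 N2 hN2.le) hdpos.le hd)
    calc R0 N1 = specRad (Matrix.diagonal (g N1) * W) := hR0 N1
    _ ≤ specRad (c • (Matrix.diagonal (g N2) * W)) :=
        specRad_mono (hA0 N1 hN1.le) hcomp
    _ = c * specRad (Matrix.diagonal (g N2) * W) := specRad_smul _ hc_nonneg
    _ < 1 * specRad (Matrix.diagonal (g N2) * W) :=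
        mul_lt_mul_of_pos_right hc_lt hS_pos
    _ = R0 N2 := by rw [one_mul, hR0 N2]
  · -- limit at 0+
    set K : ℝ := specRad (Matrix.diagonal (fun i => α i * β i / ζ i) * W) with hKdef
    have hub : ∀ N ∈ Set.Ioi (0:ℝ), R0 N ≤ N * K := by
      intro N hN
      simp only [Set.mem_Ioi] at hN
      have hcomp : ∀ i j, (Matrix.diagonal (g N) * W) i j ≤
          (N • (Matrix.diagonal (fun i => α i * β i / ζ i) * W)) i j := by
        intro i j
        rw [Matrix.smul_apply, Matrix.diagonal_mul, Matrix.diagonal_mul, smul_eq_mul,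
          ← mul_assoc]
        refine mul_le_mul_of_nonneg_right ?_ (hW0 i j)
        have h1 : g N i ≤ N * α i * β i / ζ i := by
          rw [hgdef]
          refine div_le_div_of_nonneg_left ?_ (hζ i) ?_
          · have := hα i; have := hβ i; positivity
          · have := hα i; nlinarith [hα i]
        calc g N i ≤ N * α i * β i / ζ i := h1
        _ = N * (α i * β i / ζ i) := by ring
      calc R0 N ≤ specRad (N • (Matrix.diagonal (fun i => α i * β i / ζ i) * W)) :=
            specRad_mono (hA0 N hN.le) hcomp
      _ = N * K := specRad_smul _ hN.le
    have hlb : ∀ N ∈ Set.Ioi (0:ℝ), 0 ≤ R0 N := fun N _ => specRad_nonneg _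
    have htend : Tendsto (fun N : ℝ => N * K) (nhdsWithin 0 (Set.Ioi 0)) (nhds 0) := by
      have : Tendsto (fun N : ℝ => N * K) (nhds 0) (nhds (0 * K)) :=
        (continuous_id.mul continuous_const).tendsto 0
      rw [zero_mul] at this
      exact this.mono_left nhdsWithin_le_nhds
    refine squeeze_zero' ?_ ?_ htend
    · filter_upwards [self_mem_nhdsWithin] with N hN using hlb N hN
    · filter_upwards [self_mem_nhdsWithin] with N hN using hub N hN
  · -- limit at infinity
    set Rinf : ℝ := specRad (Matrix.diagonal β * W) with hRdef
    have hR0' : 0 ≤ Rinf := specRad_nonneg _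
    rw [Metric.tendsto_atTop]
    intro ε hε
    set δ : ℝ := ε / (Rinf + 1) with hδdef
    have hδ : 0 < δ := div_pos hε (by linarith)
    set θ : ℝ := max (1 - δ) 0 with hθdef
    have hθ0 : 0 ≤ θ := le_max_right _ _
    have hθ1 : θ < 1 := max_lt (by linarith) one_pos
    have h1θ : 1 - θ ≤ δ := by
      have := le_max_left (1 - δ) (0:ℝ)
      linarith
    obtain ⟨i0⟩ := (inferInstance : Nonempty (Fin n))
    set N0 : ℝ := 1 + Finset.univ.sup' Finset.univ_nonempty
      (fun i => θ * ζ i / ((1 - θ) * α i)) with hN0def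
    have hN0ge1 : 1 ≤ N0 := by
      rw [hN0def]
      have : 0 ≤ Finset.univ.sup' Finset.univ_nonempty
          (fun i => θ * ζ i / ((1 - θ) * α i)) := by
        refine le_trans ?_
          (Finset.le_sup' (f := fun i => θ * ζ i / ((1 - θ) * α i)) (Finset.mem_univ i0))
        exact div_nonneg (mul_nonneg hθ0 (hζ i0).le)
          (mul_nonneg (by linarith) (hα i0).le)
      linarith
    refine ⟨N0, fun N hN => ?_⟩
    have hNpos : 0 < N := lt_of_lt_of_le (by linarith) hN
    have hgθ : ∀ i, θ * β i ≤ g N i := by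
      intro i
      have h1 : θ * ζ i / ((1 - θ) * α i) ≤ N := by
        refine le_trans ?_ hN
        rw [hN0def]
        have := Finset.le_sup' (fun i => θ * ζ i / ((1 - θ) * α i)) (Finset.mem_univ i)
        linarith
      have h2 : θ * ζ i ≤ N * ((1 - θ) * α i) := by
        rw [div_le_iff₀ (by have := hα i; nlinarith)] at h1
        linarith
      rw [hgdef, le_div_iff₀ (hden N hNpos.le i)]
      have := hβ i; nlinarith
    have hlow : θ * Rinf ≤ R0 N := by
      have hcomp : ∀ i j, (θ • (Matrix.diagonal β * W)) i j ≤
          (Matrix.diagonal (g N) * W) i j := by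
        intro i j
        rw [Matrix.smul_apply, Matrix.diagonal_mul, Matrix.diagonal_mul, smul_eq_mul,
          ← mul_assoc]
        exact mul_le_mul_of_nonneg_right (hgθ i) (hW0 i j)
      have hθA0 : ∀ i j, 0 ≤ (θ • (Matrix.diagonal β * W)) i j := by
        intro i j
        rw [Matrix.smul_apply, Matrix.diagonal_mul, smul_eq_mul]
        exact mul_nonneg hθ0 (mul_nonneg (hβ i).le (hW0 i j))
      calc θ * Rinf = specRad (θ • (Matrix.diagonal β * W)) := (specRad_smul _ hθ0).symm
      _ ≤ specRad (Matrix.diagonal (g N) * W) := specRad_mono hθA0 hcomp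
      _ = R0 N := (hR0 N).symm
    have hup : R0 N ≤ Rinf := by
      refine specRad_mono (hA0 N hNpos.le) ?_
      intro i j
      rw [Matrix.diagonal_mul, Matrix.diagonal_mul]
      exact mul_le_mul_of_nonneg_right (hgβ N hNpos.le i) (hW0 i j)
    rw [Real.dist_eq, abs_of_nonpos (by linarith)]
    have hδR : δ * (Rinf + 1) = ε := by
      rw [hδdef]; field_simp
    nlinarith

end Main
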